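/- Let σ be a mixed strategy such that |A_i| ≥ 2 for every player i and for every player i, either exactly one action in A_i is σ-supported, or there exist σ-supported j, k ∈ A_i with j ≠ k and σ_{ij} ≠ σ_{ik}. Define γ^{CCE} as the minimum, over all players i and all m ∈ A_i with p_{im} < 1, of ∑_{ℓ ∈ A_i} p_{iℓ} t_{iℓm}; then γ^{CCE} > 0. Moreover, for any B > 0 and any ε with 0 < ε ≤ B·γ^{CCE}, the scaled witness utility u := B·w satisfies |u_i(j, a_{-i})| ≤ B for all i, j, a_{-i}, and for every player i and every m ∈ A_i with p_{im} < 1, ∑_{a ∈ A} σ(a) (u_i(a) − u_i(m, a_{-i})) ≥ ε. -/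

import Mathlib

open scoped BigOperators

section Prelim

variable {n : ℕ}

/-- Joint action obtained from player `i`'s action `j` and the other players' actions `b`,
i.e. the joint action `(j, a_{-i})`. -/
def joinA {A : Fin n → Type*} (i : Fin n) (j : A i)
    (b : ∀ l : {l : Fin n // l ≠ i}, A l) : ∀ l, A l :=
  fun l => if h : l = i then h.symm ▸ j else b ⟨l, h⟩

/-- The actions `a_{-i}` of all players other than `i` in the joint action `a`. -/
def restr {A : Fin n → Type*} (i : Fin n) (a : ∀ l, A l) :
    ∀ l : {l : Fin n // l ≠ i}, A l :=
  fun l => a l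

/-- `σ` is a mixed strategy: nonnegative and sums to one. -/
def IsMixed {X : Type*} [Fintype X] (σ : X → ℝ) : Prop :=
  (∀ x, 0 ≤ σ x) ∧ ∑ x, σ x = 1

/-- Marginal probability `p_{ij}` that player `i` plays `j` under `σ`. -/
noncomputable def marg {A : Fin n → Type*} [∀ l, Fintype (A l)]
    (σ : (∀ l, A l) → ℝ) (i : Fin n) (j : A i) : ℝ :=
  ∑ b : ∀ l : {l : Fin n // l ≠ i}, A l, σ (joinA i j b)

/-- Conditional distribution `σ_{ij}` over the other players' actions:
`σ_{ij}(a_{-i}) = σ(j, a_{-i}) / p_{ij}` if `p_{ij} > 0`, and the zero function otherwise. -/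
noncomputable def condl {A : Fin n → Type*} [∀ l, Fintype (A l)]
    (σ : (∀ l, A l) → ℝ) (i : Fin n) (j : A i) :
    (∀ l : {l : Fin n // l ≠ i}, A l) → ℝ :=
  fun b => if 0 < marg σ i j then σ (joinA i j b) / marg σ i j else 0

/-- Euclidean norm `‖·‖₂` on `ℝ^X`. -/
noncomputable def norm2 {X : Type*} [Fintype X] (f : X → ℝ) : ℝ :=
  Real.sqrt (∑ x, f x ^ 2)

/-- Euclidean inner product `⟨·,·⟩` on `ℝ^X`. -/
noncomputable def inner2 {X : Type*} [Fintype X] (f g : X → ℝ) : ℝ :=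
  ∑ x, f x * g x

/-- The witness utility `w_i(j, a_{-i}) = σ_{ij}(a_{-i}) / ‖σ_{ij}‖₂` if `p_{ij} > 0`,
and `0` otherwise. -/
noncomputable def wit {A : Fin n → Type*} [∀ l, Fintype (A l)]
    (σ : (∀ l, A l) → ℝ) (i : Fin n) (a : ∀ l, A l) : ℝ :=
  if 0 < marg σ i (a i) then condl σ i (a i) (restr i a) / norm2 (condl σ i (a i)) else 0

open Classical in
/-- `t_{ijk} = ‖σ_{ij}‖₂ - ⟨σ_{ij}, σ_{ik}⟩ / ‖σ_{ik}‖₂` if `σ_{ik} ≠ 0`,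
and `t_{ijk} = ‖σ_{ij}‖₂` if `σ_{ik} = 0`. -/
noncomputable def tq {A : Fin n → Type*} [∀ l, Fintype (A l)]
    (σ : (∀ l, A l) → ℝ) (i : Fin n) (j k : A i) : ℝ :=
  if condl σ i k = 0 then norm2 (condl σ i j)
  else norm2 (condl σ i j) - inner2 (condl σ i j) (condl σ i k) / norm2 (condl σ i k)

end Prelim

section Aux
variable {X : Type*} [Fintype X]

lemma norm2_nonneg' (f : X → ℝ) : 0 ≤ norm2 f := Real.sqrt_nonneg _

lemma sq_norm2 (f : X → ℝ) : norm2 f ^ 2 = ∑ x, f x ^ 2 :=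
  Real.sq_sqrt (Finset.sum_nonneg fun _ _ => sq_nonneg _)

lemma abs_le_norm2 (f : X → ℝ) (x : X) : |f x| ≤ norm2 f := by
  rw [norm2, ← Real.sqrt_sq_eq_abs]
  exact Real.sqrt_le_sqrt (Finset.single_le_sum (fun y _ => sq_nonneg (f y)) (Finset.mem_univ x))

lemma norm2_pos_of_ne (f : X → ℝ) (hf : f ≠ 0) : 0 < norm2 f := by
  obtain ⟨x, hx⟩ : ∃ x, f x ≠ 0 := by
    by_contra h; push_neg at h; exact hf (funext h)
  exact Real.sqrt_pos.mpr <| Finset.sum_pos' (fun y _ => sq_nonneg _)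
    ⟨x, Finset.mem_univ x, by positivity⟩

lemma euc_norm (f : X → ℝ) : ‖(WithLp.equiv 2 (X → ℝ)).symm f‖ = norm2 f := by
  rw [EuclideanSpace.norm_eq, norm2]
  congr 1; apply Finset.sum_congr rfl; intro x _
  simp [Real.norm_eq_abs, sq_abs]

lemma euc_inner (f g : X → ℝ) :
    (inner ℝ ((WithLp.equiv 2 (X → ℝ)).symm f) ((WithLp.equiv 2 (X → ℝ)).symm g) : ℝ)
      = inner2 f g := by
  rw [PiLp.inner_apply, inner2]
  apply Finset.sum_congr rfl; intro x _
  simp [RCLike.inner_apply, mul_comm]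

lemma inner2_le (f g : X → ℝ) : inner2 f g ≤ norm2 f * norm2 g := by
  rw [← euc_inner, ← euc_norm f, ← euc_norm g]
  exact real_inner_le_norm _ _

lemma inner2_lt (f g : X → ℝ) (hf1 : ∑ x, f x = 1) (hg1 : ∑ x, g x = 1) (hne : f ≠ g) :
    inner2 f g < norm2 f * norm2 g := by
  rcases lt_or_eq_of_le (inner2_le f g) with h | h
  · exact h
  exfalso
  rw [← euc_inner, ← euc_norm f, ← euc_norm g] at h
  rw [inner_eq_norm_mul_iff_real] at h
  have hx : ∀ x : X, norm2 g * f x = norm2 f * g x := by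
    intro x
    have := congrArg (fun v => (WithLp.equiv 2 (X → ℝ)) v x) h
    simp only [euc_norm] at this
    simpa using this
  have hsum : norm2 g = norm2 f := by
    have h1 : ∑ x, norm2 g * f x = ∑ x, norm2 f * g x :=
      Finset.sum_congr rfl fun x _ => hx x
    rwa [← Finset.mul_sum, ← Finset.mul_sum, hf1, hg1, mul_one, mul_one] at h1
  have hfne : f ≠ 0 := fun h0 => by simp [h0] at hf1
  have hpos : 0 < norm2 f := norm2_pos_of_ne f hfne
  apply hne
  funext x
  have hxx := hx x
  rw [hsum] at hxx
  exact mul_left_cancel₀ (ne_of_gt hpos) hxx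

end Aux

section Game
variable {n : ℕ} {A : Fin n → Type*} [∀ l, Fintype (A l)]

omit [∀ l, Fintype (A l)] in
lemma joinA_apply_self (i : Fin n) (j : A i) (b : ∀ l : {l : Fin n // l ≠ i}, A l) :
    joinA i j b i = j := by simp [joinA]

omit [∀ l, Fintype (A l)] in
lemma restr_joinA (i : Fin n) (j : A i) (b : ∀ l : {l : Fin n // l ≠ i}, A l) :
    restr i (joinA i j b) = b := by
  funext l
  simp [restr, joinA, l.2]

omit [∀ l, Fintype (A l)] in
lemma joinA_restr (i : Fin n) (a : ∀ l, A l) :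
    joinA i (a i) (restr i a) = a := by
  funext l
  by_cases h : l = i
  · subst h; simp [joinA]
  · simp [joinA, restr, h]

def piEquiv (i : Fin n) : (A i × ∀ l : {l : Fin n // l ≠ i}, A l) ≃ (∀ l, A l) where
  toFun p := joinA i p.1 p.2
  invFun a := (a i, restr i a)
  left_inv p := by
    cases p with
    | mk j b => simp [joinA_apply_self, restr_joinA]
  right_inv a := joinA_restr i a

lemma sum_pi_split (i : Fin n) (F : (∀ l, A l) → ℝ) :
    ∑ a : ∀ l, A l, F a = ∑ j : A i, ∑ b : ∀ l : {l : Fin n // l ≠ i}, A l,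
      F (joinA i j b) := by
  rw [← Equiv.sum_comp (piEquiv (A := A) i) F, Fintype.sum_prod_type]
  rfl

variable (σ : (∀ l, A l) → ℝ)

lemma marg_nonneg (hσ : ∀ x, 0 ≤ σ x) (i : Fin n) (j : A i) : 0 ≤ marg σ i j :=
  Finset.sum_nonneg fun b _ => hσ _

lemma sum_marg (hσ : ∑ a, σ a = 1) (i : Fin n) : ∑ j : A i, marg σ i j = 1 := by
  rw [← hσ, sum_pi_split i σ]; rfl

lemma sigma_joinA_zero (hσ : ∀ x, 0 ≤ σ x) {i : Fin n} {j : A i}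
    (h : ¬ 0 < marg σ i j) (b : ∀ l : {l : Fin n // l ≠ i}, A l) :
    σ (joinA i j b) = 0 := by
  have h0 : marg σ i j = 0 := le_antisymm (not_lt.mp h) (marg_nonneg σ hσ i j)
  have := (Finset.sum_eq_zero_iff_of_nonneg (fun b _ => hσ (joinA i j b))).mp h0
  exact this b (Finset.mem_univ b)

lemma sigma_joinA_eq {i : Fin n} {j : A i}
    (h : 0 < marg σ i j) (b : ∀ l : {l : Fin n // l ≠ i}, A l) :
    σ (joinA i j b) = marg σ i j * condl σ i j b := by
  rw [condl, if_pos h]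
  field_simp

lemma condl_nonneg (hσ : ∀ x, 0 ≤ σ x) (i : Fin n) (j : A i)
    (b : ∀ l : {l : Fin n // l ≠ i}, A l) : 0 ≤ condl σ i j b := by
  rw [condl]
  split
  · exact div_nonneg (hσ _) (le_of_lt ‹_›)
  · exact le_refl 0

lemma condl_sum_one {i : Fin n} {j : A i} (h : 0 < marg σ i j) :
    ∑ b, condl σ i j b = 1 := by
  simp only [condl, if_pos h, ← Finset.sum_div]
  rw [← marg, div_self (ne_of_gt h)]

lemma condl_eq_zero {i : Fin n} {j : A i} (h : ¬ 0 < marg σ i j) :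
    condl σ i j = 0 := by
  funext b; simp [condl, h]

lemma condl_ne_zero {i : Fin n} {j : A i} (h : 0 < marg σ i j) :
    condl σ i j ≠ 0 := by
  intro h0
  have := condl_sum_one σ h
  rw [h0] at this
  simp at this

lemma tq_nonneg (i : Fin n) (l m : A i) : 0 ≤ tq σ i l m := by
  rw [tq]
  split
  · exact norm2_nonneg' _
  · rename_i h
    have hNm : 0 < norm2 (condl σ i m) := norm2_pos_of_ne _ h
    rw [sub_nonneg, div_le_iff₀ hNm]
    exact inner2_le _ _

lemma gap_eq (i : Fin n) (m : A i) (hσ : ∀ x, 0 ≤ σ x) :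
    ∑ a : ∀ l, A l, σ a * (wit σ i a - wit σ i (joinA i m (restr i a)))
      = ∑ l : A i, marg σ i l * tq σ i l m := by
  rw [sum_pi_split i]
  apply Finset.sum_congr rfl
  intro j _
  have hW1 : ∀ b, wit σ i (joinA i j b) =
      if 0 < marg σ i j then condl σ i j b / norm2 (condl σ i j) else 0 := by
    intro b
    simp only [wit, joinA_apply_self, restr_joinA]
  have hW2 : ∀ b : ∀ l : {l : Fin n // l ≠ i}, A l,
      wit σ i (joinA i m (restr i (joinA i j b))) =
      if 0 < marg σ i m then condl σ i m b / norm2 (condl σ i m) else 0 := by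
    intro b
    rw [restr_joinA]
    simp only [wit, joinA_apply_self, restr_joinA]
  by_cases hj : 0 < marg σ i j
  · have hNj : 0 < norm2 (condl σ i j) := norm2_pos_of_ne _ (condl_ne_zero σ hj)
    have hself : ∑ b, condl σ i j b * condl σ i j b = norm2 (condl σ i j) ^ 2 := by
      rw [sq_norm2]; apply Finset.sum_congr rfl; intro b _; ring
    by_cases hm : 0 < marg σ i m
    · have hNm : 0 < norm2 (condl σ i m) := norm2_pos_of_ne _ (condl_ne_zero σ hm)
      have htq : tq σ i j m = norm2 (condl σ i j)
          - inner2 (condl σ i j) (condl σ i m) / norm2 (condl σ i m) := by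
        rw [tq, if_neg (condl_ne_zero σ hm)]
      calc ∑ b, σ (joinA i j b) *
              (wit σ i (joinA i j b) - wit σ i (joinA i m (restr i (joinA i j b))))
          = ∑ b, marg σ i j * (condl σ i j b * condl σ i j b / norm2 (condl σ i j)
              - condl σ i j b * condl σ i m b / norm2 (condl σ i m)) := by
            apply Finset.sum_congr rfl; intro b _
            rw [hW1 b, hW2 b, if_pos hj, if_pos hm, sigma_joinA_eq σ hj]
            ring
        _ = marg σ i j * tq σ i j m := by
            rw [← Finset.mul_sum]
            congr 1
            rw [htq, Finset.sum_sub_distrib, ← Finset.sum_div, ← Finset.sum_div,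
              hself, inner2, sq]
            rw [mul_div_assoc, div_self (ne_of_gt hNj), mul_one]
    · have htq : tq σ i j m = norm2 (condl σ i j) := by
        rw [tq, if_pos (condl_eq_zero σ hm)]
      calc ∑ b, σ (joinA i j b) *
              (wit σ i (joinA i j b) - wit σ i (joinA i m (restr i (joinA i j b))))
          = ∑ b, marg σ i j * (condl σ i j b * condl σ i j b / norm2 (condl σ i j)) := by
            apply Finset.sum_congr rfl; intro b _
            rw [hW1 b, hW2 b, if_pos hj, if_neg hm, sigma_joinA_eq σ hj]
            ring
        _ = marg σ i j * tq σ i j m := by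
            rw [← Finset.mul_sum, ← Finset.sum_div, hself, htq, sq]
            rw [mul_div_assoc, div_self (ne_of_gt hNj), mul_one]
  · have h0 : marg σ i j = 0 := le_antisymm (not_lt.mp hj) (marg_nonneg σ hσ i j)
    rw [h0, zero_mul]
    apply Finset.sum_eq_zero
    intro b _
    rw [sigma_joinA_zero σ hσ hj b, zero_mul]

lemma abs_wit_le_one (i : Fin n) (a : ∀ l, A l) : |wit σ i a| ≤ 1 := by
  rw [wit]
  split
  · rename_i h
    have hN : 0 < norm2 (condl σ i (a i)) := norm2_pos_of_ne _ (condl_ne_zero σ h)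
    rw [abs_div, abs_of_pos hN, div_le_one hN]
    exact abs_le_norm2 _ _
  · simp

end Game


/-- **ε-sCCE via the scaled witness.** Suppose each `|A i| ≥ 2` and each player either has
exactly one `σ`-supported action or has two `σ`-supported actions with differing
conditionals. Then `γ^{CCE} = min_{i, m : p_{im} < 1} ∑_ℓ p_{iℓ} t_{iℓm} > 0`, i.e. each
such sum is positive; and for any `B > 0` and `0 < ε ≤ B γ^{CCE}` (i.e.
`ε ≤ B ∑_ℓ p_{iℓ} t_{iℓm}` for all such `i, m`), the scaled witness `u = B w` is bounded by
`B` and achieves a CCE deviation gap of at least `ε`. -/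
theorem eps_sCCE_of_scaled_witness {n : ℕ} {A : Fin n → Type*}
    [∀ l, Fintype (A l)] [∀ l, Nonempty (A l)]
    (hcard : ∀ l, 2 ≤ Fintype.card (A l))
    (σ : (∀ l, A l) → ℝ) (hσ : IsMixed σ)
    (hc : ∀ i : Fin n,
      (∃! j : A i, 0 < marg σ i j) ∨
      (∃ j k : A i, j ≠ k ∧ 0 < marg σ i j ∧ 0 < marg σ i k ∧ condl σ i j ≠ condl σ i k)) :
    (∀ i : Fin n, ∀ m : A i, marg σ i m < 1 → 0 < ∑ l : A i, marg σ i l * tq σ i l m) ∧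
    (∀ B : ℝ, 0 < B → ∀ ε : ℝ, 0 < ε →
      (∀ i : Fin n, ∀ m : A i, marg σ i m < 1 →
        ε ≤ B * ∑ l : A i, marg σ i l * tq σ i l m) →
      ((∀ i : Fin n, ∀ a : ∀ l, A l, |B * wit σ i a| ≤ B) ∧
        ∀ i : Fin n, ∀ m : A i, marg σ i m < 1 →
          ε ≤ ∑ a : ∀ l, A l,
                σ a * (B * wit σ i a - B * wit σ i (joinA i m (restr i a))))) := by
  obtain ⟨hσ0, hσ1⟩ := hσ
  have hterm_nonneg : ∀ i : Fin n, ∀ m l : A i,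
      0 ≤ marg σ i l * tq σ i l m := fun i m l =>
    mul_nonneg (marg_nonneg σ hσ0 i l) (tq_nonneg σ i l m)
  have hpos : ∀ i : Fin n, ∀ m : A i, marg σ i m < 1 →
      0 < ∑ l : A i, marg σ i l * tq σ i l m := by
    intro i m hm
    rcases hc i with ⟨j, hj, huniq⟩ | ⟨j, k, hjk, hj, hk, hne⟩
    · -- exactly one supported action
      have hmz : ¬ 0 < marg σ i m := by
        intro hmpos
        have hmj : m = j := huniq m hmpos
        have : marg σ i j = 1 := by
          have h1 := sum_marg σ hσ1 i
          rw [Finset.sum_eq_single j] at h1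
          · exact h1
          · intro l _ hl
            by_contra hc0
            exact hl (huniq l (lt_of_le_of_ne (marg_nonneg σ hσ0 i l) (Ne.symm hc0)))
          · intro h; exact absurd (Finset.mem_univ j) h
        rw [hmj, this] at hm
        exact lt_irrefl 1 hm
      have htq : tq σ i j m = norm2 (condl σ i j) := by
        rw [tq, if_pos (condl_eq_zero σ hmz)]
      apply Finset.sum_pos' (fun l _ => hterm_nonneg i m l)
      refine ⟨j, Finset.mem_univ j, ?_⟩
      rw [htq]
      exact mul_pos hj (norm2_pos_of_ne _ (condl_ne_zero σ hj))
    · -- two supported actions with differing conditionals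
      by_cases hmpos : 0 < marg σ i m
      · have hkey : ∃ l : A i, 0 < marg σ i l ∧ condl σ i l ≠ condl σ i m := by
          by_cases hcj : condl σ i j = condl σ i m
          · exact ⟨k, hk, by rw [← hcj]; exact fun h => hne h.symm⟩
          · exact ⟨j, hj, hcj⟩
        obtain ⟨l, hl, hlm⟩ := hkey
        have hNm : 0 < norm2 (condl σ i m) := norm2_pos_of_ne _ (condl_ne_zero σ hmpos)
        have hstrict : inner2 (condl σ i l) (condl σ i m)
            < norm2 (condl σ i l) * norm2 (condl σ i m) :=
          inner2_lt _ _ (condl_sum_one σ hl) (condl_sum_one σ hmpos) hlm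
        have htq : 0 < tq σ i l m := by
          rw [tq, if_neg (condl_ne_zero σ hmpos), sub_pos, div_lt_iff₀ hNm]
          exact hstrict
        apply Finset.sum_pos' (fun l' _ => hterm_nonneg i m l')
        exact ⟨l, Finset.mem_univ l, mul_pos hl htq⟩
      · have htq : tq σ i j m = norm2 (condl σ i j) := by
          rw [tq, if_pos (condl_eq_zero σ hmpos)]
        apply Finset.sum_pos' (fun l _ => hterm_nonneg i m l)
        refine ⟨j, Finset.mem_univ j, ?_⟩
        rw [htq]
        exact mul_pos hj (norm2_pos_of_ne _ (condl_ne_zero σ hj))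
  refine ⟨hpos, ?_⟩
  intro B hB ε hε hε2
  constructor
  · intro i a
    rw [abs_mul, abs_of_pos hB]
    calc B * |wit σ i a| ≤ B * 1 :=
          mul_le_mul_of_nonneg_left (abs_wit_le_one σ i a) (le_of_lt hB)
      _ = B := mul_one B
  · intro i m hm
    have hsum : ∑ a : ∀ l, A l, σ a * (B * wit σ i a - B * wit σ i (joinA i m (restr i a)))
        = B * ∑ a : ∀ l, A l, σ a * (wit σ i a - wit σ i (joinA i m (restr i a))) := by
      rw [Finset.mul_sum]
      apply Finset.sum_congr rfl
      intro a _
      ring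
    rw [hsum, gap_eq σ i m hσ0]
    exact hε2 i m hm
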